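/- Let b be a Liouville number and a a real number such that a, b, 1 are linearly independent over ℚ. Then the 2×2 matrix with rows (a, b) and (0, 0) is a 2×2 Liouville matrix. -/
import Mathlib


open Matrix

noncomputable section

/-- Coerce an integer vector to a real vector. -/
def vecR {k : ℕ} (q : Fin k → ℤ) : Fin k → ℝ := fun i => (q i : ℝ)

/-- A real `m × n` matrix is a Liouville matrix if `A q - p ≠ 0` for all nonzero integer
vector pairs, and for every `N` there are integer vectors `p`, `q ≠ 0` with
`‖A q - p‖ < ‖q‖ ^ (-N)` (supremum norms). -/
def IsLiouvilleMatrix {m n : ℕ} (A : Matrix (Fin m) (Fin n) ℝ) : Prop :=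
  (∀ (q : Fin n → ℤ) (p : Fin m → ℤ), ¬(q = 0 ∧ p = 0) →
      A.mulVec (vecR q) ≠ vecR p) ∧
  (∀ N : ℕ, ∃ (p : Fin m → ℤ) (q : Fin n → ℤ), q ≠ 0 ∧
      ‖A.mulVec (vecR q) - vecR p‖ < 1 / ‖q‖ ^ N)

theorem liouvilleMatrix_of_liouville_entry (a b : ℝ) (hb : Liouville b)
    (hind : LinearIndependent ℚ ![a, b, (1 : ℝ)]) :
    IsLiouvilleMatrix !![a, b; 0, 0] := by
  constructor
  · rintro q p hqp heq
    have h0 := congrFun heq 0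
    have h1 := congrFun heq 1
    simp [Matrix.mulVec, dotProduct, vecR, Fin.sum_univ_two] at h0 h1
    rw [Fintype.linearIndependent_iff] at hind
    have key := hind ![(q 0 : ℚ), (q 1 : ℚ), -(p 0 : ℚ)] ?_
    · apply hqp
      have e0 : q 0 = 0 := by have := key 0; simp at this; exact_mod_cast this
      have e1 : q 1 = 0 := by have := key 1; simp at this; exact_mod_cast this
      have e2 : p 0 = 0 := by have := key 2; simp at this; exact_mod_cast this
      have e3 : p 1 = 0 := by exact_mod_cast h1.symm
      constructor
      · funext i; fin_cases i <;> simp [e0, e1]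
      · funext i; fin_cases i <;> simp [e2, e3]
    · simp [Fin.sum_univ_three, Rat.smul_def]
      linarith [h0]
  · intro N
    obtain ⟨p0, q1, hq1, hne, hlt⟩ := hb (N + 1)
    refine ⟨![p0, 0], ![0, q1], ?_, ?_⟩
    · intro h
      have := congrFun h 1
      simp at this
      omega
    · have hq1R : (1:ℝ) < (q1:ℝ) := by exact_mod_cast hq1
      have hq1pos : (0:ℝ) < (q1:ℝ) := by linarith
      have hq1' : (0:ℤ) < q1 := by omega
      have hnorm : ‖![(0:ℤ), q1]‖ = (q1:ℝ) := by
        apply le_antisymm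
        · rw [pi_norm_le_iff_of_nonneg (by positivity)]
          intro i; fin_cases i <;> simp [Int.norm_eq_abs] <;>
            [positivity; rw [abs_of_pos (by exact_mod_cast hq1')]]
        · have := norm_le_pi_norm ![(0:ℤ), q1] 1
          simpa [Int.norm_eq_abs, abs_of_pos (show (0:ℝ) < (q1:ℝ) by exact_mod_cast hq1')] using this
      rw [hnorm]
      have hcpos : (0:ℝ) < 1 / (q1:ℝ) ^ N := by positivity
      rw [pi_norm_lt_iff hcpos]
      intro i
      have hcomp : |b * q1 - p0| < 1 / (q1:ℝ) ^ N := by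
        have h2 : |b - p0 / q1| * q1 < (1 / (q1:ℝ) ^ (N+1)) * q1 :=
          mul_lt_mul_of_pos_right hlt hq1pos
        have e : b * q1 - p0 = (b - p0 / q1) * q1 := by field_simp
        have h3 : |b - p0 / q1| * q1 = |b * q1 - p0| := by
          rw [e, abs_mul, abs_of_pos hq1pos]
        have h4 : (1 / (q1:ℝ) ^ (N+1)) * q1 = 1 / (q1:ℝ) ^ N := by
          field_simp
          ring
        rw [h3, h4] at h2
        exact h2
      fin_cases i <;>
        simp [Matrix.mulVec, dotProduct, vecR, Fin.sum_univ_two, Real.norm_eq_abs]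
      · rw [inv_eq_one_div]
        exact hcomp
      · positivity
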